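/- Let (a,b) ∈ {(3,0), (1,2)} ⊆ (ℤ/4ℤ)², i.e., θ = a + bw ∈ {3, 1+2w}, and R = R_θ. Then (2) = (2w) and (1+w) = (3+w) = (1+3w) = (3+3w) as ideals of R, and R has exactly five ideals, which form the chain (0) ⊊ (2+2w) ⊊ (2) ⊊ (1+w) ⊊ R. -/

import Mathlib

open Polynomial

/-- The base ring ℤ/4ℤ. -/
abbrev Z4 := ZMod 4

/-- The polynomial X² − (a + bX) over ℤ/4ℤ. -/
noncomputable def wPoly (a b : Z4) : Z4[X] := X ^ 2 - (C b * X + C a)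

/-- The ring R_{a+bw} = (ℤ/4ℤ)[X]/(X² − (a + bX)); every element is uniquely
x₀ + x₁·w with x₀, x₁ ∈ ℤ/4ℤ, and w² = a + b·w. -/
abbrev Rw (a b : Z4) : Type := AdjoinRoot (wPoly a b)

/-- The element w of R_{a+bw}. -/
noncomputable def ww (a b : Z4) : Rw a b := AdjoinRoot.root _

instance : Nontrivial Z4 := ⟨0, 1, by decide⟩

theorem lin_deg_le (a b : Z4) : (C b * X + C a).degree < 2 := by
  apply lt_of_le_of_lt (Polynomial.degree_add_le _ _)
  rw [sup_lt_iff]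
  constructor
  · rcases eq_or_ne b 0 with hb | hb
    · simp only [hb, map_zero, zero_mul, Polynomial.degree_zero]
      decide
    · rw [Polynomial.degree_C_mul_X hb]; norm_num
  · exact lt_of_le_of_lt Polynomial.degree_C_le (by norm_num)

theorem wPoly_monic (a b : Z4) : (wPoly a b).Monic := by
  unfold wPoly
  exact Polynomial.monic_X_pow_sub (lin_deg_le a b)

theorem wPoly_deg (a b : Z4) : (wPoly a b).degree = 2 := by
  unfold wPoly
  compute_degree!

theorem ww_sq (a b : Z4) :
    ww a b ^ 2 = AdjoinRoot.of _ a + AdjoinRoot.of _ b * ww a b := by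
  have h : AdjoinRoot.mk (wPoly a b) (X ^ 2 - (C b * X + C a)) = 0 := AdjoinRoot.mk_self
  simp only [map_sub, map_pow, map_add, map_mul, AdjoinRoot.mk_X, AdjoinRoot.mk_C,
    sub_eq_zero] at h
  have h2 : AdjoinRoot.root (wPoly a b) ^ 2 =
      AdjoinRoot.of (wPoly a b) b * AdjoinRoot.root (wPoly a b) +
        AdjoinRoot.of (wPoly a b) a := h
  rw [ww, h2]; ring

theorem rw_repr (a b : Z4) (z : Rw a b) :
    ∃ c₀ c₁ : Z4, z = AdjoinRoot.of _ c₀ + AdjoinRoot.of _ c₁ * ww a b := by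
  obtain ⟨p, rfl⟩ := AdjoinRoot.mk_surjective z
  have hm := wPoly_monic a b
  have hmk : AdjoinRoot.mk (wPoly a b) p = AdjoinRoot.mk (wPoly a b) (p %ₘ wPoly a b) := by
    rw [AdjoinRoot.mk_eq_mk]
    exact ⟨p /ₘ wPoly a b, by linear_combination -(Polynomial.modByMonic_add_div p (wPoly a b))⟩
  have hd : (p %ₘ wPoly a b).degree ≤ 1 := by
    have := Polynomial.degree_modByMonic_lt p hm
    rw [wPoly_deg] at this
    exact Order.le_of_lt_succ (by exact_mod_cast this)
  refine ⟨(p %ₘ wPoly a b).coeff 0, (p %ₘ wPoly a b).coeff 1, ?_⟩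
  rw [hmk, Polynomial.eq_X_add_C_of_degree_le_one hd]
  simp only [map_add, map_mul, AdjoinRoot.mk_C, AdjoinRoot.mk_X, Polynomial.coeff_add,
    Polynomial.coeff_C_mul, Polynomial.coeff_X_zero, Polynomial.coeff_X_one, Polynomial.coeff_C]
  rw [ww]; ring_nf
  simp [mul_comm]

theorem two_add_two_ww_ne_zero (a b : Z4) : (2 : Rw a b) + 2 * ww a b ≠ 0 := by
  intro h
  have key : AdjoinRoot.mk (wPoly a b) (C 2 * X + C 2) = 2 + 2 * ww a b := by
    simp only [map_add, map_mul, AdjoinRoot.mk_C, AdjoinRoot.mk_X, map_ofNat]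
    rw [ww]; ring
  rw [← key, AdjoinRoot.mk_eq_zero] at h
  have hgne : (C (2:Z4) * X + C 2) ≠ 0 := by
    intro h0
    have h1 := congrArg (fun q => Polynomial.coeff q 0) h0
    simp only [Polynomial.coeff_add, Polynomial.coeff_C_mul, Polynomial.coeff_X_zero,
      Polynomial.coeff_C, Polynomial.coeff_zero, mul_zero, if_pos rfl, zero_add] at h1
    exact absurd h1 (by decide)
  exact (wPoly_monic a b).not_dvd_of_degree_lt hgne
    (by rw [wPoly_deg]; exact lin_deg_le 2 2) h

theorem span_isMaximal (a b : Z4) (hab3 : a + b = 3)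
    (h2mem : (2 : Rw a b) ∈ Ideal.span {1 + ww a b}) :
    (Ideal.span {1 + ww a b}).IsMaximal := by
  have hroot : Polynomial.eval₂ (ZMod.castHom (by norm_num : (2:ℕ) ∣ 4) (ZMod 2)) 1
      (wPoly a b) = 0 := by
    simp only [wPoly, eval₂_sub, eval₂_pow, eval₂_X, eval₂_add, eval₂_mul, eval₂_C,
      one_pow, mul_one]
    rw [sub_eq_zero, ← map_add]
    rw [add_comm] at hab3
    rw [hab3]
    decide
  set φ : Rw a b →+* ZMod 2 :=
    AdjoinRoot.lift (ZMod.castHom (by norm_num : (2:ℕ) ∣ 4) (ZMod 2)) 1 hroot with hφ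
  have hφof : ∀ c : Z4, φ (AdjoinRoot.of _ c) = ZMod.castHom (by norm_num : (2:ℕ) ∣ 4) (ZMod 2) c :=
    fun c => AdjoinRoot.lift_of hroot
  have hφw : φ (ww a b) = 1 := AdjoinRoot.lift_root hroot
  have hker : RingHom.ker φ = Ideal.span {1 + ww a b} := by
    apply le_antisymm
    · intro x hx
      obtain ⟨c₀, c₁, rfl⟩ := rw_repr a b x
      rw [RingHom.mem_ker, map_add, map_mul, hφof, hφof, hφw, mul_one, ← map_add] at hx
      have key : ∀ s : Z4, ZMod.castHom (by norm_num : (2:ℕ) ∣ 4) (ZMod 2) s = 0 →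
          ∃ d : Z4, s = 2 * d := by decide
      obtain ⟨d, hd⟩ := key _ hx
      have hc : c₀ = 2 * (d - c₁) + c₁ := by linear_combination hd
      rw [hc]
      have hrw : AdjoinRoot.of (wPoly a b) (2 * (d - c₁) + c₁) +
          AdjoinRoot.of (wPoly a b) c₁ * ww a b =
          AdjoinRoot.of (wPoly a b) (d - c₁) * 2 +
          AdjoinRoot.of (wPoly a b) c₁ * (1 + ww a b) := by
        simp only [map_add, map_mul, map_ofNat]
        ring
      rw [hrw]
      exact Ideal.add_mem _ (Ideal.mul_mem_left _ _ h2mem)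
        (Ideal.mul_mem_left _ _ (Ideal.mem_span_singleton_self _))
    · rw [Ideal.span_le]
      intro y hy
      simp only [Set.mem_singleton_iff] at hy
      subst hy
      rw [SetLike.mem_coe, RingHom.mem_ker, map_add, map_one, hφw]
      decide
  have hsurj : Function.Surjective φ := by
    intro y
    have hy : y = 0 ∨ y = 1 := by revert y; decide
    rcases hy with rfl | rfl
    · exact ⟨0, map_zero φ⟩
    · exact ⟨1, map_one φ⟩
  have := RingHom.ker_isMaximal_of_surjective φ hsurj
  rwa [hker] at this

theorem unit_of_not_mem {R : Type*} [CommRing R] (t : R)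
    (hmax : (Ideal.span {t}).IsMaximal) (h4 : t ^ 4 = 0) :
    ∀ x : R, x ∉ Ideal.span {t} → IsUnit x := by
  intro x hx
  by_contra hu
  obtain ⟨M, hM, hxM⟩ := Ideal.exists_le_maximal (Ideal.span {x})
    (by rwa [Ne, Ideal.span_singleton_eq_top])
  have htM : t ∈ M := hM.isPrime.mem_of_pow_mem 4 (h4 ▸ M.zero_mem)
  have : Ideal.span {t} = M := hmax.eq_of_le hM.ne_top
    ((Ideal.span_singleton_le_iff_mem _).mpr htM)
  exact hx (this ▸ hxM (Ideal.mem_span_singleton_self x))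

theorem step_lem {R : Type*} [CommRing R] (t : R)
    (hmax : (Ideal.span {t}).IsMaximal) (h4 : t ^ 4 = 0) (k : ℕ)
    {x : R} (hx : x ∈ Ideal.span {t ^ k}) (hx' : x ∉ Ideal.span {t ^ (k + 1)}) :
    Ideal.span {x} = Ideal.span {t ^ k} := by
  rw [Ideal.mem_span_singleton] at hx
  obtain ⟨y, rfl⟩ := hx
  have hy : y ∉ Ideal.span {t} := by
    intro hy
    rw [Ideal.mem_span_singleton] at hy
    obtain ⟨z, rfl⟩ := hy
    exact hx' (Ideal.mem_span_singleton.mpr ⟨z, by ring⟩)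
  exact Ideal.span_singleton_mul_right_unit (unit_of_not_mem t hmax h4 y hy) _

theorem not_mem_succ {R : Type*} [CommRing R] (t : R) (h4 : t ^ 4 = 0) (h3 : t ^ 3 ≠ 0)
    (k : ℕ) (hk : 1 ≤ k) (hk' : k ≤ 2) : t ^ k ∉ Ideal.span {t ^ (k + 1)} := by
  intro h
  rw [Ideal.mem_span_singleton] at h
  obtain ⟨y, hy⟩ := h
  have hnil : IsNilpotent (t * y) := ⟨4, by rw [mul_pow, h4, zero_mul]⟩
  have hu : IsUnit (1 - t * y) := hnil.isUnit_one_sub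
  have h0 : t ^ k * (1 - t * y) = 0 := by linear_combination hy
  have hk0 : t ^ k = 0 := (hu.mul_left_eq_zero).mp h0
  apply h3
  interval_cases k
  · rw [pow_one] at hk0; rw [hk0]; ring
  · calc t ^ 3 = t ^ 2 * t := by ring
    _ = 0 := by rw [hk0, zero_mul]

theorem classify {R : Type*} [CommRing R] (t : R)
    (hmax : (Ideal.span {t}).IsMaximal) (h4 : t ^ 4 = 0) (h3 : t ^ 3 ≠ 0) :
    (∀ I : Ideal R, I = ⊥ ∨ I = Ideal.span {t ^ 3} ∨ I = Ideal.span {t ^ 2} ∨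
      I = Ideal.span {t} ∨ I = ⊤) ∧
    (⊥ : Ideal R) < Ideal.span {t ^ 3} ∧ Ideal.span {t ^ 3} < Ideal.span {t ^ 2} ∧
    Ideal.span {t ^ 2} < Ideal.span {t} ∧ Ideal.span {t} < ⊤ := by
  refine ⟨?_, ?_, ?_, ?_, ?_⟩
  · intro I
    by_cases h1 : I ≤ Ideal.span {t}
    · by_cases h2 : I ≤ Ideal.span {t ^ 2}
      · by_cases h3' : I ≤ Ideal.span {t ^ 3}
        · by_cases h0 : I = ⊥
          · exact Or.inl h0
          · refine Or.inr (Or.inl ?_)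
            obtain ⟨x, hxI, hx0⟩ := Submodule.exists_mem_ne_zero_of_ne_bot h0
            have hstep : Ideal.span {x} = Ideal.span {t ^ 3} := by
              apply step_lem t hmax h4 3 (h3' hxI)
              rw [show (3:ℕ)+1 = 4 from rfl, h4]
              simpa [Ideal.span_singleton_eq_bot.mpr rfl] using hx0
            exact le_antisymm h3' (hstep ▸ (Ideal.span_singleton_le_iff_mem _).mpr hxI)
        · refine Or.inr (Or.inr (Or.inl ?_))
          obtain ⟨x, hxI, hx3⟩ := Set.not_subset.mp h3'
          have hstep : Ideal.span {x} = Ideal.span {t ^ 2} :=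
            step_lem t hmax h4 2 (h2 hxI) hx3
          exact le_antisymm h2 (hstep ▸ (Ideal.span_singleton_le_iff_mem _).mpr hxI)
      · refine Or.inr (Or.inr (Or.inr (Or.inl ?_)))
        obtain ⟨x, hxI, hx2⟩ := Set.not_subset.mp h2
        have hstep : Ideal.span {x} = Ideal.span {t ^ 1} :=
          step_lem t hmax h4 1 (by rw [pow_one]; exact h1 hxI) hx2
        rw [pow_one] at hstep
        exact le_antisymm h1 (hstep ▸ (Ideal.span_singleton_le_iff_mem _).mpr hxI)
    · refine Or.inr (Or.inr (Or.inr (Or.inr ?_)))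
      obtain ⟨x, hxI, hx⟩ := Set.not_subset.mp h1
      exact Ideal.eq_top_of_isUnit_mem I hxI (unit_of_not_mem t hmax h4 x hx)
  · rw [bot_lt_iff_ne_bot, Ne, Ideal.span_singleton_eq_bot]; exact h3
  · refine lt_of_le_of_ne (Ideal.span_singleton_le_span_singleton.mpr ⟨t, by ring⟩) ?_
    intro h
    exact not_mem_succ t h4 h3 2 (by norm_num) le_rfl
      (h ▸ Ideal.mem_span_singleton_self _)
  · refine lt_of_le_of_ne (Ideal.span_singleton_le_span_singleton.mpr ⟨t, by ring⟩) ?_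
    intro h
    have := not_mem_succ t h4 h3 1 le_rfl (by norm_num)
    rw [pow_one] at this
    exact this (h ▸ Ideal.mem_span_singleton_self _)
  · exact lt_top_iff_ne_top.mpr hmax.ne_top

/-- for θ = a + bw ∈ {3, 1+2w}, in R_θ one has (2) = (2w) and
(1+w) = (3+w) = (1+3w) = (3+3w), and R_θ has exactly five ideals, forming the chain
(0) ⊊ (2+2w) ⊊ (2) ⊊ (1+w) ⊊ R_θ. -/
theorem ideals_of_Rw_theta_three_case (a b : Z4) (hab : (a = 3 ∧ b = 0) ∨ (a = 1 ∧ b = 2)) :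
    Ideal.span {(2 : Rw a b)} = Ideal.span {2 * ww a b} ∧
    Ideal.span {1 + ww a b} = Ideal.span {3 + ww a b} ∧
    Ideal.span {1 + ww a b} = Ideal.span {1 + 3 * ww a b} ∧
    Ideal.span {1 + ww a b} = Ideal.span {3 + 3 * ww a b} ∧
    (∀ I : Ideal (Rw a b),
      I = ⊥ ∨ I = Ideal.span {2 + 2 * ww a b} ∨ I = Ideal.span {(2 : Rw a b)} ∨
      I = Ideal.span {1 + ww a b} ∨ I = ⊤) ∧
    (⊥ : Ideal (Rw a b)) < Ideal.span {2 + 2 * ww a b} ∧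
    Ideal.span {2 + 2 * ww a b} < Ideal.span {(2 : Rw a b)} ∧
    Ideal.span {(2 : Rw a b)} < Ideal.span {1 + ww a b} ∧
    Ideal.span {1 + ww a b} < (⊤ : Ideal (Rw a b)) := by
  rcases hab with ⟨rfl, rfl⟩ | ⟨rfl, rfl⟩
  · -- case a = 3, b = 0
    set w : Rw 3 0 := ww 3 0 with hw
    have hw2 : w ^ 2 = 3 := by
      have h := ww_sq 3 0
      simp only [map_ofNat, map_zero, zero_mul, add_zero] at h
      exact h
    have h40 : (4 : Rw 3 0) = 0 := by
      rw [show (4 : Rw 3 0) = AdjoinRoot.of _ (4 : Z4) from (map_ofNat _ 4).symm,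
        show (4 : Z4) = 0 by decide, map_zero]
    have h2mem : (2 : Rw 3 0) ∈ Ideal.span {1 + w} := by
      rw [Ideal.mem_span_singleton]
      exact ⟨1 + 3 * w, by linear_combination -3 * hw2 - (w + 2) * h40⟩
    have hmax : (Ideal.span {1 + w}).IsMaximal := span_isMaximal 3 0 (by decide) h2mem
    have hu : IsUnit w := IsUnit.of_mul_eq_one (a := w) (3 * w)
      (by linear_combination 3 * hw2 + 2 * h40)
    have ht2 : (1 + w) ^ 2 = 2 * w := by linear_combination hw2 + h40
    have ht3 : (1 + w) ^ 3 = 2 + 2 * w := by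
      linear_combination (w + 3) * hw2 + (w + 2) * h40
    have ht4 : (1 + w) ^ 4 = 0 := by
      linear_combination (w ^ 2 + 4 * w + 9) * hw2 + (4 * w + 7) * h40
    have h3ne : (1 + w) ^ 3 ≠ 0 := by rw [ht3]; exact two_add_two_ww_ne_zero 3 0
    obtain ⟨hcl, hlt0, hlt1, hlt2, hlt3⟩ := classify (1 + w) hmax ht4 h3ne
    have hs3 : Ideal.span {(1 + w) ^ 3} = Ideal.span {2 + 2 * w} := by rw [ht3]
    have hs2 : Ideal.span {(1 + w) ^ 2} = Ideal.span {(2 : Rw 3 0)} := by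
      rw [ht2]; exact Ideal.span_singleton_mul_right_unit hu 2
    rw [hs3] at hcl hlt0 hlt1
    rw [hs2] at hcl hlt1 hlt2
    refine ⟨(Ideal.span_singleton_mul_right_unit hu 2).symm, ?_, ?_, ?_, hcl, hlt0, hlt1, hlt2, hlt3⟩
    · refine le_antisymm (Ideal.span_singleton_le_span_singleton.mpr ⟨3 * w, ?_⟩)
        (Ideal.span_singleton_le_span_singleton.mpr ⟨w, ?_⟩)
      · linear_combination -3 * hw2 - (2 * w + 2) * h40
      · linear_combination -hw2
    · refine le_antisymm (Ideal.span_singleton_le_span_singleton.mpr ⟨w, ?_⟩)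
        (Ideal.span_singleton_le_span_singleton.mpr ⟨3 * w, ?_⟩)
      · linear_combination -3 * hw2 - 2 * h40
      · linear_combination -3 * hw2 - 2 * h40
    · refine le_antisymm (Ideal.span_singleton_le_span_singleton.mpr ⟨3, ?_⟩)
        (Ideal.span_singleton_le_span_singleton.mpr ⟨3, ?_⟩)
      · linear_combination -(2 * w + 2) * h40
      · ring
  · -- case a = 1, b = 2
    set w : Rw 1 2 := ww 1 2 with hw
    have hw2 : w ^ 2 = 1 + 2 * w := by
      have h := ww_sq 1 2
      simp only [map_ofNat, map_one] at h
      exact h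
    have h40 : (4 : Rw 1 2) = 0 := by
      rw [show (4 : Rw 1 2) = AdjoinRoot.of _ (4 : Z4) from (map_ofNat _ 4).symm,
        show (4 : Z4) = 0 by decide, map_zero]
    have h2mem : (2 : Rw 1 2) ∈ Ideal.span {1 + w} := by
      rw [Ideal.mem_span_singleton]
      exact ⟨1 + w, by linear_combination -hw2 - w * h40⟩
    have hmax : (Ideal.span {1 + w}).IsMaximal := span_isMaximal 1 2 (by decide) h2mem
    have hu : IsUnit w := IsUnit.of_mul_eq_one (a := w) (w + 2)
      (by linear_combination hw2 + w * h40)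
    have ht2 : (1 + w) ^ 2 = 2 := by linear_combination hw2 + w * h40
    have ht3 : (1 + w) ^ 3 = 2 + 2 * w := by
      linear_combination (w + 5) * hw2 + (3 * w + 1) * h40
    have ht4 : (1 + w) ^ 4 = 0 := by
      linear_combination (w ^ 2 + 6 * w + 19) * hw2 + (12 * w + 5) * h40
    have h3ne : (1 + w) ^ 3 ≠ 0 := by rw [ht3]; exact two_add_two_ww_ne_zero 1 2
    obtain ⟨hcl, hlt0, hlt1, hlt2, hlt3⟩ := classify (1 + w) hmax ht4 h3ne
    have hs3 : Ideal.span {(1 + w) ^ 3} = Ideal.span {2 + 2 * w} := by rw [ht3]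
    have hs2 : Ideal.span {(1 + w) ^ 2} = Ideal.span {(2 : Rw 1 2)} := by rw [ht2]
    rw [hs3] at hcl hlt0 hlt1
    rw [hs2] at hcl hlt1 hlt2
    refine ⟨(Ideal.span_singleton_mul_right_unit hu 2).symm, ?_, ?_, ?_, hcl, hlt0, hlt1, hlt2, hlt3⟩
    · refine le_antisymm (Ideal.span_singleton_le_span_singleton.mpr ⟨w, ?_⟩)
        (Ideal.span_singleton_le_span_singleton.mpr ⟨2 + w, ?_⟩)
      · linear_combination -hw2 - w * h40
      · linear_combination -hw2 - w * h40
    · refine le_antisymm (Ideal.span_singleton_le_span_singleton.mpr ⟨3 * w, ?_⟩)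
        (Ideal.span_singleton_le_span_singleton.mpr ⟨w, ?_⟩)
      · linear_combination -9 * hw2 - (5 * w + 2) * h40
      · linear_combination -hw2
    · refine le_antisymm (Ideal.span_singleton_le_span_singleton.mpr ⟨3, ?_⟩)
        (Ideal.span_singleton_le_span_singleton.mpr ⟨3, ?_⟩)
      · linear_combination -(2 * w + 2) * h40
      · ring
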